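/- Let ρ : ℝ^d → ℂ^{2^d × 2^d} be the tensor product ρ(x) = ρ¹(x_1) ⊗ ⋯ ⊗ ρ¹(x_d), where ρ¹(t) = (1/2)·[[1 + cos t, i sin t], [−i sin t, 1 − cos t]]. Then for each k, the partial derivative satisfies ∂_k ρ(x) = (ρ(x + (π/2)e_k) − ρ(x − (π/2)e_k)) / 2, where e_k is the k-th standard basis vector. -/

import Mathlib

open Real Complex Matrix

/-- The single-qubit encoded state `ρ¹(t) = R_X(t)|0⟩⟨0|R_X(t)†`. -/
noncomputable def rho1 (t : ℝ) : Matrix (Fin 2) (Fin 2) ℂ :=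
  (1 / 2 : ℂ) • !![(1 + Real.cos t : ℂ), Complex.I * Real.sin t;
                   -Complex.I * Real.sin t, 1 - Real.cos t]

/-- The `d`-fold Kronecker product `ρ(x) = ρ¹(x_1) ⊗ ⋯ ⊗ ρ¹(x_d)`, with the tensor-factor
index set `Fin d → Fin 2` for bit-strings. -/
noncomputable def rhoAll {d : ℕ} (x : Fin d → ℝ) :
    Matrix (Fin d → Fin 2) (Fin d → Fin 2) ℂ :=
  Matrix.of fun k l => ∏ j : Fin d, rho1 (x j) (k j) (l j)

lemma rho1_hasDerivAt (s : ℝ) (i j : Fin 2) :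
    HasDerivAt (fun t => rho1 t i j)
      ((rho1 (s + π / 2) i j - rho1 (s - π / 2) i j) / 2) s := by
  have hc : HasDerivAt (fun t : ℝ => ((Real.cos t : ℂ))) (-Real.sin s : ℝ) s :=
    (Real.hasDerivAt_cos s).ofReal_comp
  have hs : HasDerivAt (fun t : ℝ => ((Real.sin t : ℂ))) (Real.cos s : ℝ) s :=
    (Real.hasDerivAt_sin s).ofReal_comp
  fin_cases i <;> fin_cases j <;>
    simp only [rho1, Matrix.smul_apply, of_apply, cons_val', cons_val_zero, cons_val_one,
      head_cons, head_fin_const, empty_val', cons_val_fin_one, smul_eq_mul,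
      Real.cos_add_pi_div_two, Real.sin_add_pi_div_two, Real.cos_sub_pi_div_two,
      Real.sin_sub_pi_div_two, Fin.zero_eta, Fin.mk_one]
  · refine (((hasDerivAt_const s (1:ℂ)).add hc).const_mul (1/2 : ℂ)).congr_deriv ?_
    push_cast [Matrix.cons_val_zero, Matrix.cons_val_one, Matrix.head_cons, Matrix.vecHead]; ring
  · refine ((hs.const_mul Complex.I).const_mul (1/2 : ℂ)).congr_deriv ?_
    push_cast [Matrix.cons_val_zero, Matrix.cons_val_one, Matrix.head_cons, Matrix.vecHead]; ring
  · refine ((hs.const_mul (-Complex.I)).const_mul (1/2 : ℂ)).congr_deriv ?_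
    push_cast [Matrix.cons_val_zero, Matrix.cons_val_one, Matrix.head_cons, Matrix.vecHead]; ring
  · refine (((hasDerivAt_const s (1:ℂ)).sub hc).const_mul (1/2 : ℂ)).congr_deriv ?_
    push_cast [Matrix.cons_val_zero, Matrix.cons_val_one, Matrix.head_cons, Matrix.vecHead]; ring

/-- the parameter-shift rule for the product state, entrywise:
`∂_k ρ(x) = (ρ(x + (π/2)e_k) − ρ(x − (π/2)e_k)) / 2`. -/
theorem rhoAll_parameter_shift {d : ℕ} (x : Fin d → ℝ) (k : Fin d)
    (a b : Fin d → Fin 2) :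
    deriv (fun t => rhoAll (Function.update x k t) a b) (x k)
      = ((rhoAll (x + (π / 2) • (Pi.single k 1 : Fin d → ℝ))
          - rhoAll (x - (π / 2) • (Pi.single k 1 : Fin d → ℝ))) a b) / 2 := by
  classical
  set C : ℂ := ∏ j ∈ Finset.univ.erase k, rho1 (x j) (a j) (b j) with hC
  have hfun : (fun t => rhoAll (Function.update x k t) a b)
      = fun t => rho1 t (a k) (b k) * C := by
    funext t
    simp only [rhoAll, of_apply]
    rw [← Finset.mul_prod_erase _ _ (Finset.mem_univ k), Function.update_self]
    congr 1
    exact Finset.prod_congr rfl fun j hj =>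
      by rw [Function.update_of_ne (Finset.ne_of_mem_erase hj)]
  have h1 : ∀ c : ℝ, rhoAll (x + c • (Pi.single k 1 : Fin d → ℝ)) a b
      = rho1 (x k + c) (a k) (b k) * C := by
    intro c
    simp only [rhoAll, of_apply]
    rw [← Finset.mul_prod_erase _ _ (Finset.mem_univ k)]
    congr 1
    · simp
    · exact Finset.prod_congr rfl fun j hj => by
        have hjk : j ≠ k := Finset.ne_of_mem_erase hj
        simp [Pi.single_eq_of_ne hjk]
  have hd : HasDerivAt (fun t => rhoAll (Function.update x k t) a b)
      (((rho1 (x k + π / 2) (a k) (b k) - rho1 (x k - π / 2) (a k) (b k)) / 2) * C) (x k) := by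
    rw [hfun]
    exact (rho1_hasDerivAt (x k) (a k) (b k)).mul_const C
  rw [hd.deriv, Matrix.sub_apply, h1]
  have h2 : rhoAll (x - (π / 2) • (Pi.single k 1 : Fin d → ℝ)) a b
      = rho1 (x k - π / 2) (a k) (b k) * C := by
    rw [sub_eq_add_neg, ← neg_smul, h1, ← sub_eq_add_neg]
  rw [h2]; ring
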